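/- Let ν be a valuation on K, μ a valuation on K[x] extending ν, β₁ = μ(x), and ν₁ the monomial valuation ν₁(Σ d_i x^i) = min_i(ν(d_i) + iβ₁). If h = Σ_{i=0}^s d_i x^i satisfies ν₁(h) < μ(h), then Σ_{i ∈ S} in_ν(d_i) · in_μ(x)^i = 0 in the graded algebra G_μ, where S = {i : iβ₁ + ν(d_i) = ν₁(h)}. -/

import Mathlib

open Polynomial Finset

private lemma aux_add_self_eq_zero {Γ : Type*} [AddCommGroup Γ] [LinearOrder Γ] [IsOrderedAddMonoid Γ]
    {a : Γ} (h : a + a = 0) : a = 0 := by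
  rcases lt_trichotomy a 0 with h1|h1|h1
  · exact absurd h (ne_of_lt (by simpa using add_lt_add h1 h1))
  · exact h1
  · exact absurd h (ne_of_gt (by simpa using add_lt_add h1 h1))

/-- If `h = Σ_{i≤s} dᵢ xⁱ` satisfies `ν₁(h) < μ(h)`, then the sum of the initial
forms `Σ_{i∈S} in_ν(dᵢ)·in_μ(x)ⁱ` vanishes in the graded algebra `G_μ`; this is
encoded by the statement that `μ` of the corresponding sum of terms of minimal
`ν₁`-value strictly exceeds `ν₁(h)`, where `S = {i : i·β₁ + ν(dᵢ) = ν₁(h)}`. -/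
theorem stmt2 {K : Type*} [Field K] {Γ : Type*} [AddCommGroup Γ] [LinearOrder Γ] [IsOrderedAddMonoid Γ]
    (ν : K → WithTop Γ) (μ : Polynomial K → WithTop Γ) (β₁ : Γ)
    (hν0 : ∀ a, ν a = ⊤ ↔ a = 0)
    (hνm : ∀ a b, ν (a * b) = ν a + ν b)
    (hνa : ∀ a b, min (ν a) (ν b) ≤ ν (a + b))
    (hμ0 : ∀ f, μ f = ⊤ ↔ f = 0)
    (hμm : ∀ f g, μ (f * g) = μ f + μ g)
    (hμa : ∀ f g, min (μ f) (μ g) ≤ μ (f + g))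
    (hext : ∀ a : K, μ (C a) = ν a)
    (hβ : μ X = (β₁ : WithTop Γ))
    (s : ℕ) (d : ℕ → K)
    (ν₁h : WithTop Γ)
    (hν₁ : ν₁h = (range (s + 1)).inf
      fun i => ν (d i) + ((i • β₁ : Γ) : WithTop Γ))
    (hlt : ν₁h < μ (∑ i ∈ range (s + 1), C (d i) * X ^ i)) :
    ν₁h < μ (∑ i ∈ (range (s + 1)).filter
        (fun i => ν (d i) + ((i • β₁ : Γ) : WithTop Γ) = ν₁h),
      C (d i) * X ^ i) := by
  -- ν 1 = 0
  have hν1 : ν 1 = 0 := by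
    have h := hνm 1 1
    rw [one_mul] at h
    have hne : ν 1 ≠ ⊤ := by simp [hν0]
    obtain ⟨a, ha⟩ := WithTop.ne_top_iff_exists.mp hne
    rw [← ha, ← WithTop.coe_add, WithTop.coe_eq_coe] at h
    rw [← ha, left_eq_add.mp h, WithTop.coe_zero]
  -- ν (-1) = 0
  have hνneg : ν (-1) = 0 := by
    have h := hνm (-1) (-1)
    rw [neg_mul_neg, one_mul, hν1] at h
    have hne : ν (-1) ≠ ⊤ := by simp [hν0]
    obtain ⟨a, ha⟩ := WithTop.ne_top_iff_exists.mp hne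
    rw [← ha, ← WithTop.coe_add, eq_comm, WithTop.coe_eq_zero] at h
    rw [← ha, aux_add_self_eq_zero h, WithTop.coe_zero]
  -- μ (-f) = μ f
  have hμneg : ∀ f, μ (-f) = μ f := by
    intro f
    have : -f = C (-1) * f := by simp
    rw [this, hμm, hext, hνneg, zero_add]
  -- inf of μ of terms ≤ μ of sum
  have hinf : ∀ (t : Finset ℕ) (f : ℕ → Polynomial K),
      (t.inf fun i => μ (f i)) ≤ μ (∑ i ∈ t, f i) := by
    intro t f
    induction t using Finset.induction with
    | empty => simp [hμ0]
    | insert _ _ h ih =>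
      rw [Finset.sum_insert h, Finset.inf_insert]
      exact le_trans (min_le_min le_rfl ih) (hμa _ _)
  -- μ (X ^ i) = i • β₁
  have hXpow : ∀ i : ℕ, μ (X ^ i) = ((i • β₁ : Γ) : WithTop Γ) := by
    intro i
    induction i with
    | zero =>
      rw [pow_zero, zero_nsmul, WithTop.coe_zero,
        show (1 : Polynomial K) = C 1 by simp, hext, hν1]
    | succ n ih =>
      rw [pow_succ, hμm, ih, hβ, succ_nsmul, WithTop.coe_add]
  have hterm : ∀ i : ℕ, μ (C (d i) * X ^ i) = ν (d i) + ((i • β₁ : Γ) : WithTop Γ) := by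
    intro i
    rw [hμm, hext, hXpow]
  set p : ℕ → Prop := fun i => ν (d i) + ((i • β₁ : Γ) : WithTop Γ) = ν₁h with hp
  set T := ∑ i ∈ (range (s + 1)).filter p, C (d i) * X ^ i with hT
  set R := ∑ i ∈ (range (s + 1)).filter (fun i => ¬ p i), C (d i) * X ^ i with hR
  have hsplit : T + R = ∑ i ∈ range (s + 1), C (d i) * X ^ i :=
    Finset.sum_filter_add_sum_filter_not _ _ _
  have hνtop : ν₁h < ⊤ := lt_of_lt_of_le hlt le_top
  -- ν₁h < μ R
  have hRlt : ν₁h < μ R := by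
    refine lt_of_lt_of_le ?_ (hinf _ _)
    rw [Finset.lt_inf_iff hνtop]
    intro i hi
    rw [Finset.mem_filter] at hi
    rw [hterm]
    refine lt_of_le_of_ne ?_ (Ne.symm hi.2)
    rw [hν₁]
    exact Finset.inf_le hi.1
  -- conclude
  have : T = (T + R) + (-R) := by ring
  calc ν₁h < min (μ (T + R)) (μ (-R)) := by
        rw [hμneg, hsplit]; exact lt_min hlt hRlt
    _ ≤ μ ((T + R) + (-R)) := hμa _ _
    _ = μ T := by rw [← this]
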